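/- Let (V, ℓ) be an L∞-algebra with ℓ_k = 0 for k ≥ 3 (a shifted dg Lie algebra), let u_0 = 0 and u_1 ∈ ker ℓ_1. Define recursively u_{k+1} = −h_1(Obs^k), where Obs^k = Σ_{i=2}^{k+1} Σ_{r_1+⋯+r_i = k+1} binom(k+1; r_1,…,r_i)(1/i!) ℓ_i(u_{r_1} ⊙ ⋯ ⊙ u_{r_i}) (only i = 2 contributes), and h_1 : V_1 → V_0 is part of homotopy operators witnessing H¹(V,ℓ_1) = 0 (ℓ_1 h_1 + h_2 ℓ_1 = id on V_1). Then the formal power series u(t) = Σ_{k≥1} (u_k/k!) t^k satisfies the formal Maurer–Cartan equation ℓ_1(u(t)) + ½ℓ_2(u(t), u(t)) = 0 in V_1[[t]]. -/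
import Mathlib


open Finset

theorem choose_cyc {n r j s : ℕ} (h : r + j + s = n) :
    (n.choose r) * ((n-r).choose j) = (n.choose j) * ((n-j).choose s) := by
  have hr : r ≤ n := by omega
  have h1 : n - r = j + s := by omega
  have h2 : n - j = r + s := by omega
  have hj : j ≤ n := by omega
  have e1 := Nat.choose_mul_factorial_mul_factorial hr
  have e2 := Nat.choose_mul_factorial_mul_factorial hj
  have e3 := Nat.choose_mul_factorial_mul_factorial (Nat.le_add_right j s)
  have e4 := Nat.choose_mul_factorial_mul_factorial (Nat.le_add_left s r)
  rw [h1] at e1 ⊢; rw [h2] at e2 ⊢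
  simp only [Nat.add_sub_cancel_left, Nat.add_sub_cancel] at e3 e4
  have hpos : 0 < r.factorial * j.factorial * s.factorial := by positivity
  apply Nat.eq_of_mul_eq_mul_right hpos
  have E1 : n.choose r * ((j+s).choose j) * (r.factorial * j.factorial * s.factorial) = n.factorial := by
    rw [← e1, ← e3]; ring
  have E2 : n.choose j * ((r+s).choose s) * (r.factorial * j.factorial * s.factorial) = n.factorial := by
    rw [← e2, ← e4]; ring
  rw [E1, E2]

theorem cyc_rot {M : Type*} [AddCommGroup M] [Module ℝ M] (n : ℕ) (F : ℕ → ℕ → ℕ → M) :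
    ∑ p ∈ (range (n+1)).sigma (fun r => range (n+1-r)),
      ((n.choose p.1 * (n-p.1).choose p.2 : ℕ) : ℝ) • F p.1 p.2 (n - p.1 - p.2)
    = ∑ p ∈ (range (n+1)).sigma (fun r => range (n+1-r)),
      ((n.choose p.1 * (n-p.1).choose p.2 : ℕ) : ℝ) • F (n - p.1 - p.2) p.1 p.2 := by
  apply Finset.sum_nbij' (i := fun p => (⟨p.2, n - p.1 - p.2⟩ : Σ _ : ℕ, ℕ))
    (j := fun p => (⟨n - p.1 - p.2, p.1⟩ : Σ _ : ℕ, ℕ))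
  · intro p hp; simp only [Finset.mem_sigma, Finset.mem_range] at hp ⊢; omega
  · intro p hp; simp only [Finset.mem_sigma, Finset.mem_range] at hp ⊢; omega
  · intro p hp; simp only [Finset.mem_sigma, Finset.mem_range] at hp; ext <;> simp <;> omega
  · intro p hp; simp only [Finset.mem_sigma, Finset.mem_range] at hp; ext <;> simp <;> omega
  · intro p hp
    simp only [Finset.mem_sigma, Finset.mem_range] at hp
    have h1 : n - p.2 - (n - p.1 - p.2) = p.1 := by omega
    have h2 : p.2 + (n - p.1 - p.2) + p.1 = n := by omega
    have := choose_cyc (n := n) (r := p.1) (j := p.2) (s := n - p.1 - p.2) (by omega)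
    simp only [h1]
    rw [← this]

theorem cyclic_sum_zero {M : Type*} [AddCommGroup M] [Module ℝ M] (n : ℕ) (F : ℕ → ℕ → ℕ → M)
    (hF : ∀ a b c, F a b c + F b c a + F c a b = 0) :
    ∑ r ∈ range (n+1), ∑ j ∈ range (n+1-r),
      ((n.choose r * (n-r).choose j : ℕ) : ℝ) • F r j (n-r-j) = 0 := by
  have flat := Finset.sum_sigma (range (n+1)) (fun r => range (n+1-r))
    (fun p => ((n.choose p.1 * (n-p.1).choose p.2 : ℕ) : ℝ) • F p.1 p.2 (n - p.1 - p.2))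
  rw [← flat]
  have h1 : ∑ p ∈ (range (n+1)).sigma (fun r => range (n+1-r)),
      ((n.choose p.1 * (n-p.1).choose p.2 : ℕ) : ℝ) • F p.1 p.2 (n - p.1 - p.2)
      = ∑ p ∈ (range (n+1)).sigma (fun r => range (n+1-r)),
      ((n.choose p.1 * (n-p.1).choose p.2 : ℕ) : ℝ) • F (n - p.1 - p.2) p.1 p.2 := cyc_rot n F
  have h2 : ∑ p ∈ (range (n+1)).sigma (fun r => range (n+1-r)),
      ((n.choose p.1 * (n-p.1).choose p.2 : ℕ) : ℝ) • F p.1 p.2 (n - p.1 - p.2)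
      = ∑ p ∈ (range (n+1)).sigma (fun r => range (n+1-r)),
      ((n.choose p.1 * (n-p.1).choose p.2 : ℕ) : ℝ) • F p.2 (n - p.1 - p.2) p.1 :=
    (cyc_rot n F).trans (cyc_rot n (fun a b c => F c a b))
  have h3 : (∑ p ∈ (range (n+1)).sigma (fun r => range (n+1-r)),
      ((n.choose p.1 * (n-p.1).choose p.2 : ℕ) : ℝ) • F p.1 p.2 (n - p.1 - p.2))
      + (∑ p ∈ (range (n+1)).sigma (fun r => range (n+1-r)),
      ((n.choose p.1 * (n-p.1).choose p.2 : ℕ) : ℝ) • F (n - p.1 - p.2) p.1 p.2)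
      + (∑ p ∈ (range (n+1)).sigma (fun r => range (n+1-r)),
      ((n.choose p.1 * (n-p.1).choose p.2 : ℕ) : ℝ) • F p.2 (n - p.1 - p.2) p.1) = 0 := by
    rw [← Finset.sum_add_distrib, ← Finset.sum_add_distrib]
    apply Finset.sum_eq_zero
    intro p hp
    rw [← smul_add, ← smul_add]
    have e : F p.1 p.2 (n - p.1 - p.2) + F (n - p.1 - p.2) p.1 p.2
        + F p.2 (n - p.1 - p.2) p.1 = 0 := by
      have := hF p.1 p.2 (n - p.1 - p.2); rw [← this]; abel
    rw [e, smul_zero]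
  rw [← h1, ← h2] at h3
  have h4 : (3:ℝ) • ∑ p ∈ (range (n+1)).sigma (fun r => range (n+1-r)),
      ((n.choose p.1 * (n-p.1).choose p.2 : ℕ) : ℝ) • F p.1 p.2 (n - p.1 - p.2) = 0 := by
    rw [show (3:ℝ) = 1+1+1 by norm_num, add_smul, add_smul, one_smul]
    exact h3
  rcases smul_eq_zero.mp h4 with h | h
  · norm_num at h
  · exact h


/-- For a shifted dg Lie algebra (ℓ_k = 0, k ≥ 3) with homotopy operators in degree 1
witnessing H¹ = 0, the recursively defined coefficients u_{k+1} = −h₁(Obs^k) (with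
u_0 = 0, u_1 ∈ ker ℓ₁, and Obs^k = Σ_{r₁+r₂=k+1, r_j≥1} binom(k+1;r₁,r₂)(1/2!)ℓ₂(u_{r₁},u_{r₂}))
yield a formal power series u(t) = Σ_{k≥1} (u_k/k!)t^k satisfying the formal
Maurer–Cartan equation ℓ₁(u(t)) + ½ℓ₂(u(t),u(t)) = 0 in V₁[[t]], i.e. coefficientwise:
∀ k, ℓ₁(u_k) + ½ Σ_{j=0}^{k} binom(k,j) ℓ₂(u_j, u_{k−j}) = 0. -/
theorem formal_MC_from_homotopy_operators
    {V₀ V₁ V₂ : Type*} [AddCommGroup V₀] [Module ℝ V₀] [AddCommGroup V₁] [Module ℝ V₁]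
    [AddCommGroup V₂] [Module ℝ V₂]
    (ℓ₁ : V₀ →ₗ[ℝ] V₁) (ℓ₁' : V₁ →ₗ[ℝ] V₂)
    (ℓ₂ : V₀ →ₗ[ℝ] V₀ →ₗ[ℝ] V₁) (ℓ₂' : V₀ →ₗ[ℝ] V₁ →ₗ[ℝ] V₂)
    (hsym : ∀ a b : V₀, ℓ₂ a b = ℓ₂ b a)
    (hJac1 : ∀ a : V₀, ℓ₁' (ℓ₁ a) = 0)
    (hJac2 : ∀ a b : V₀, ℓ₁' (ℓ₂ a b) + ℓ₂' a (ℓ₁ b) + ℓ₂' b (ℓ₁ a) = 0)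
    (hJac3 : ∀ a b c : V₀, ℓ₂' c (ℓ₂ a b) + ℓ₂' a (ℓ₂ b c) + ℓ₂' b (ℓ₂ c a) = 0)
    -- homotopy operators in degree 1, witnessing H¹(V, ℓ₁) = 0
    (h₁ : V₁ →ₗ[ℝ] V₀) (h₂ : V₂ →ₗ[ℝ] V₁)
    (hhom : ∀ w : V₁, ℓ₁ (h₁ w) + h₂ (ℓ₁' w) = w)
    -- the recursively defined coefficients
    (u : ℕ → V₀)
    (hu0 : u 0 = 0)
    (hu1 : ℓ₁ (u 1) = 0)
    (hurec : ∀ k : ℕ, 1 ≤ k →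
      u (k + 1) = -h₁ ((2 : ℝ)⁻¹ •
        ∑ r ∈ Finset.Icc 1 k, ((k + 1).choose r : ℝ) • ℓ₂ (u r) (u (k + 1 - r)))) :
    ∀ k : ℕ, ℓ₁ (u k) +
      (2 : ℝ)⁻¹ • ∑ j ∈ Finset.range (k + 1), (k.choose j : ℝ) • ℓ₂ (u j) (u (k - j)) = 0 := by
  intro k
  induction k using Nat.strong_induction_on with
  | _ n IH =>
  obtain h0 | h1' | ⟨m, hm, rfl⟩ : n = 0 ∨ n = 1 ∨ ∃ m, 1 ≤ m ∧ n = m + 1 := by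
    rcases n with _ | n
    · exact Or.inl rfl
    rcases n with _ | k
    · exact Or.inr (Or.inl rfl)
    · exact Or.inr (Or.inr ⟨k+1, by omega, rfl⟩)
  · subst h0; simp [hu0]
  · subst h1'; simp [Finset.sum_range_succ, hu0, hu1]
  -- main case: n = m + 1, 1 ≤ m
  set Obs : V₁ := ∑ r ∈ Finset.Icc 1 m, ((m + 1).choose r : ℝ) • ℓ₂ (u r) (u (m + 1 - r)) with hObs
  -- Step A : the goal's sum equals Obs
  have hA : ∑ j ∈ Finset.range (m + 1 + 1), ((m+1).choose j : ℝ) • ℓ₂ (u j) (u (m + 1 - j)) = Obs := by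
    rw [hObs]; symm
    apply Finset.sum_subset
    · intro x hx; simp only [Finset.mem_Icc, Finset.mem_range] at *; omega
    · intro x hx hnx
      simp only [Finset.mem_Icc, Finset.mem_range, not_and, not_le] at hx hnx
      have : x = 0 ∨ x = m + 1 := by omega
      rcases this with rfl | rfl
      · simp [hu0]
      · have e : m + 1 - (m+1) = 0 := by omega
        rw [e, hu0]; simp
  -- the cocycle property
  have hcoc : ℓ₁' Obs = 0 := by
    rw [hObs, map_sum]
    have hJ2 : ∀ a b : V₀, ℓ₁' (ℓ₂ a b) = -(ℓ₂' a (ℓ₁ b)) - ℓ₂' b (ℓ₁ a) := by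
      intro a b
      have h := hJac2 a b
      have h' : ℓ₁' (ℓ₂ a b) + (ℓ₂' a (ℓ₁ b) + ℓ₂' b (ℓ₁ a)) = 0 := by rw [← h]; abel
      rw [eq_neg_of_add_eq_zero_left h']; abel
    have expand : ∀ r, ℓ₁' (((m+1).choose r : ℝ) • ℓ₂ (u r) (u (m+1-r)))
        = -(((m+1).choose r : ℝ) • ℓ₂' (u r) (ℓ₁ (u (m+1-r))))
          - ((m+1).choose r : ℝ) • ℓ₂' (u (m+1-r)) (ℓ₁ (u r)) := by
      intro r
      rw [map_smul, hJ2, smul_sub, smul_neg]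
    simp_rw [expand]
    rw [Finset.sum_sub_distrib, Finset.sum_neg_distrib]
    -- B = A by reflection
    have hBA : ∑ r ∈ Finset.Icc 1 m, ((m+1).choose r : ℝ) • ℓ₂' (u (m+1-r)) (ℓ₁ (u r))
        = ∑ r ∈ Finset.Icc 1 m, ((m+1).choose r : ℝ) • ℓ₂' (u r) (ℓ₁ (u (m+1-r))) := by
      apply Finset.sum_nbij' (i := fun r => m + 1 - r) (j := fun r => m + 1 - r)
      · intro r hr; simp only [Finset.mem_Icc] at *; omega
      · intro r hr; simp only [Finset.mem_Icc] at *; omega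
      · intro r hr; simp only [Finset.mem_Icc] at hr; omega
      · intro r hr; simp only [Finset.mem_Icc] at hr; omega
      · intro r hr
        simp only [Finset.mem_Icc] at hr
        have e1 : m + 1 - (m + 1 - r) = r := by omega
        have e2 : (m+1).choose (m + 1 - r) = (m+1).choose r :=
          Nat.choose_symm (by omega)
        rw [e1, e2]
    rw [hBA]
    -- now show A = 0
    have hAz : ∑ r ∈ Finset.Icc 1 m, ((m+1).choose r : ℝ) • ℓ₂' (u r) (ℓ₁ (u (m+1-r))) = 0 := by
      have hIH : ∀ r ∈ Finset.Icc 1 m, ℓ₁ (u (m+1-r))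
          = -((2:ℝ)⁻¹ • ∑ j ∈ Finset.range (m+1-r+1),
              ((m+1-r).choose j : ℝ) • ℓ₂ (u j) (u (m+1-r-j))) := by
        intro r hr
        simp only [Finset.mem_Icc] at hr
        exact eq_neg_of_add_eq_zero_left (IH (m+1-r) (by omega))
      rw [Finset.sum_congr rfl (fun r hr => by rw [hIH r hr])]
      have step : ∀ r ∈ Finset.Icc 1 m,
          ((m+1).choose r : ℝ) • ℓ₂' (u r) (-((2:ℝ)⁻¹ • ∑ j ∈ Finset.range (m+1-r+1),
              ((m+1-r).choose j : ℝ) • ℓ₂ (u j) (u (m+1-r-j))))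
          = -((2:ℝ)⁻¹ • ∑ j ∈ Finset.range (m+1-r+1),
              (((m+1).choose r * (m+1-r).choose j : ℕ) : ℝ) • ℓ₂' (u r) (ℓ₂ (u j) (u (m+1-r-j)))) := by
        intro r hr
        rw [map_neg, map_smul, map_sum, smul_neg, ← smul_comm ((2:ℝ)⁻¹)]
        congr 2
        rw [Finset.smul_sum]
        apply Finset.sum_congr rfl
        intro j hj
        rw [map_smul, smul_smul, Nat.cast_mul]
      rw [Finset.sum_congr rfl step, Finset.sum_neg_distrib, ← Finset.smul_sum]
      rw [neg_eq_zero]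
      rw [smul_eq_zero]
      right
      have hF3 : ∀ a b c : ℕ, ℓ₂' (u a) (ℓ₂ (u b) (u c)) + ℓ₂' (u b) (ℓ₂ (u c) (u a))
          + ℓ₂' (u c) (ℓ₂ (u a) (u b)) = 0 := by
        intro a b c
        have := hJac3 (u b) (u c) (u a)
        rw [← this]
      have hext : ∑ r ∈ Finset.Icc 1 m, ∑ j ∈ Finset.range (m+1-r+1),
            (((m+1).choose r * (m+1-r).choose j : ℕ) : ℝ) • ℓ₂' (u r) (ℓ₂ (u j) (u (m+1-r-j)))
          = ∑ r ∈ Finset.range (m+1+1), ∑ j ∈ Finset.range (m+1+1-r),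
            (((m+1).choose r * (m+1-r).choose j : ℕ) : ℝ) • ℓ₂' (u r) (ℓ₂ (u j) (u (m+1-r-j))) := by
        rw [Finset.sum_congr rfl (fun r hr => by
          have hr' := Finset.mem_Icc.mp hr
          rw [show m+1-r+1 = m+1+1-r by omega])]
        apply Finset.sum_subset
        · intro x hx; simp only [Finset.mem_Icc, Finset.mem_range] at *; omega
        · intro x hx hnx
          simp only [Finset.mem_Icc, Finset.mem_range, not_and, not_le] at hx hnx
          have : x = 0 ∨ x = m + 1 := by omega
          rcases this with rfl | rfl
          · simp [hu0]
          · rw [show m+1+1-(m+1) = 1 by omega]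
            simp [hu0]
      rw [hext]
      exact cyclic_sum_zero (m+1) (fun a b c => ℓ₂' (u a) (ℓ₂ (u b) (u c))) hF3
    rw [hAz]; simp
  -- conclude
  rw [hA, hurec m hm, map_neg, ← hObs]
  have hw := hhom ((2:ℝ)⁻¹ • Obs)
  simp only [map_smul, hcoc, smul_zero, map_zero, add_zero] at hw
  simp only [map_smul]
  rw [hw]
  abel
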